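/- Let μ_1, …, μ_K be independent real-valued random variables on a probability space, let i*, k ∈ {1,…,K} with k ≠ i*, let y ∈ ℝ, and set p := P(μ_{i*} > y); assume p > 0. Then P( (∀ j, μ_j ≤ μ_k) and μ_k ≤ y ) ≤ ((1−p)/p) · P( μ_{i*} > y and (∀ j ≠ i*, μ_j ≤ y) ). -/

import Mathlib

open MeasureTheory ProbabilityTheory

/-- Key comparison inequality for Thompson sampling: for independent real random
variables `μ₁,…,μ_K`, indices `k ≠ i*`, threshold `y` and
`p = P(μ_{i*} > y) > 0`, the probability that arm `k` has the largest sample while its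
sample is below `y` is at most `((1−p)/p)` times the probability that `μ_{i*} > y` and
all other samples are at most `y`. -/
theorem thompson_comparison_inequality
    {Ω : Type*} [MeasurableSpace Ω] (P : Measure Ω) [IsProbabilityMeasure P]
    {K : ℕ} (μ : Fin K → Ω → ℝ)
    (hmeas : ∀ j, Measurable (μ j))
    (hindep : iIndepFun μ P)
    (istar k : Fin K) (hne : k ≠ istar)
    (y : ℝ) (p : ℝ)
    (hp : p = (P {ω | y < μ istar ω}).toReal) (hppos : 0 < p) :
    (P {ω | (∀ j, μ j ω ≤ μ k ω) ∧ μ k ω ≤ y}).toReal ≤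
      ((1 - p) / p) *
        (P {ω | y < μ istar ω ∧ ∀ j, j ≠ istar → μ j ω ≤ y}).toReal := by
  classical
  set S : Fin K → Set Ω := fun j => μ j ⁻¹' Set.Iic y with hSdef
  set T : Fin K → Set Ω := fun j =>
    if j = istar then μ istar ⁻¹' Set.Ioi y else S j with hTdef
  have hSm : ∀ j, MeasurableSet[MeasurableSpace.comap (μ j) inferInstance] (S j) :=
    fun j => ⟨Set.Iic y, measurableSet_Iic, rfl⟩
  have hTm : ∀ j, MeasurableSet[MeasurableSpace.comap (μ j) inferInstance] (T j) := by
    intro j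
    by_cases h : j = istar
    · subst h; simp only [hTdef, if_pos rfl]; exact ⟨Set.Ioi y, measurableSet_Ioi, rfl⟩
    · simp only [hTdef, if_neg h]; exact hSm j
  have hSprod : P (⋂ j, S j) = ∏ j, P (S j) := hindep.meas_iInter hSm
  have hTprod : P (⋂ j, T j) = ∏ j, P (T j) := hindep.meas_iInter hTm
  -- identify the target set with ⋂ T
  have hTset : {ω | y < μ istar ω ∧ ∀ j, j ≠ istar → μ j ω ≤ y} = ⋂ j, T j := by
    ext ω
    simp only [Set.mem_iInter, Set.mem_setOf_eq, hTdef]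
    constructor
    · rintro ⟨h1, h2⟩ j
      by_cases h : j = istar
      · simpa [h] using h1
      · simpa [h, hSdef] using h2 j h
    · intro h
      refine ⟨by simpa using h istar, fun j hj => by simpa [hj, hSdef] using h j⟩
  -- the LHS set is contained in ⋂ S
  have hsub : {ω | (∀ j, μ j ω ≤ μ k ω) ∧ μ k ω ≤ y} ⊆ ⋂ j, S j := by
    intro ω ⟨h1, h2⟩
    simp only [Set.mem_iInter, hSdef, Set.mem_preimage, Set.mem_Iic]
    exact fun j => le_trans (h1 j) h2
  -- split products over istar
  set q : ENNReal := ∏ j ∈ Finset.univ.erase istar, P (S j) with hq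
  have hSsplit : ∏ j, P (S j) = P (S istar) * q := by
    exact (Finset.mul_prod_erase Finset.univ (fun j => P (S j)) (Finset.mem_univ istar)).symm
  have hTsplit : ∏ j, P (T j) = P (μ istar ⁻¹' Set.Ioi y) * q := by
    rw [hq, ← Finset.mul_prod_erase _ (fun j => P (T j)) (Finset.mem_univ istar)]
    congr 1
    · simp [hTdef]
    · exact Finset.prod_congr rfl fun j hj => by
        simp [hTdef, Finset.ne_of_mem_erase hj]
  have hpe : {ω | y < μ istar ω} = μ istar ⁻¹' Set.Ioi y := rfl
  -- P (S istar) has toReal 1 - p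
  have hcompl : P (S istar) = 1 - P (μ istar ⁻¹' Set.Ioi y) := by
    have : S istar = (μ istar ⁻¹' Set.Ioi y)ᶜ := by
      ext ω; simp [hSdef, not_lt]
    rw [this, prob_compl_eq_one_sub ((hmeas istar) measurableSet_Ioi)]
  have hpr : (P (μ istar ⁻¹' Set.Ioi y)).toReal = p := by rw [hp, hpe]
  have hcr : (P (S istar)).toReal = 1 - p := by
    rw [hcompl, ENNReal.toReal_sub_of_le prob_le_one ENNReal.one_ne_top, hpr,
      ENNReal.toReal_one]
  calc (P {ω | (∀ j, μ j ω ≤ μ k ω) ∧ μ k ω ≤ y}).toReal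
      ≤ (P (⋂ j, S j)).toReal := by
        exact ENNReal.toReal_mono (measure_ne_top P _) (measure_mono hsub)
    _ = (1 - p) * q.toReal := by
        rw [hSprod, hSsplit, ENNReal.toReal_mul, hcr]
    _ = ((1 - p) / p) * (p * q.toReal) := by
        field_simp
    _ = ((1 - p) / p) *
        (P {ω | y < μ istar ω ∧ ∀ j, j ≠ istar → μ j ω ≤ y}).toReal := by
        rw [hTset, hTprod, hTsplit, ENNReal.toReal_mul, hpr]
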